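/- arXiv:2203.02548 — 2 statements merged into one kernel-verified Lean document; each statement's English description precedes it below -/
import Mathlib

section
/- Let R be a real 3×3 orthogonal matrix (RᵀR = I), let ϱ ∈ ℝ³ with ϱ × e₁ ≠ 0, set t = (ϱ × e₁)/‖ϱ × e₁‖, let J = diag(J₁, J₁, J₃) with J₁, J₃ > 0, and let ε ∈ ℝ. Assume t · (Re₃) = 0. Suppose Ω⁻, Ω̄⁺ ∈ ℝ³ satisfy the impulse equation Ω̄⁺ − Ω⁻ = J⁻¹Rᵀ(ϱ × (−j e₁)) for some j ∈ ℝ, together with the restitution condition ((RΩ̄⁺) × ϱ) · e₁ = −ε ((RΩ⁻) × ϱ) · e₁. Then Ω̄⁺ = Ω⁻ − (1 + ε)(Ω⁻ · (Rᵀt))(Rᵀt). -/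
open Matrix
open scoped Matrix

/-- The Euclidean norm of a vector in `Fin 3 → ℝ`. -/
noncomputable def euclNorm (v : Fin 3 → ℝ) : ℝ :=
  ‖(EuclideanSpace.equiv (Fin 3) ℝ).symm v‖

lemma euclNorm_pos' {v : Fin 3 → ℝ} (h : v ≠ 0) : 0 < euclNorm v := by
  rw [euclNorm, norm_pos_iff]; simpa using h

lemma euclNorm_sq' (v : Fin 3 → ℝ) : euclNorm v ^ 2 = v ⬝ᵥ v := by
  rw [euclNorm, EuclideanSpace.norm_eq, Real.sq_sqrt (by positivity)]
  simp [dotProduct, Fin.sum_univ_three, sq]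

lemma cross_dot' (a b c : Fin 3 → ℝ) : (a ⨯₃ b) ⬝ᵥ c = a ⬝ᵥ (b ⨯₃ c) := by
  simp [cross_apply, dotProduct, Fin.sum_univ_three]; ring


/-- Collision response of the 3D pendulum: if `R` is orthogonal,
`t = (ϱ × e₁)/‖ϱ × e₁‖` is perpendicular to `R e₃`, and `Ω⁻, Ω̄⁺` satisfy the impulse
equation `Ω̄⁺ − Ω⁻ = J⁻¹Rᵀ(ϱ × (−j e₁))` together with the restitution condition
`((RΩ̄⁺) × ϱ)·e₁ = −ε ((RΩ⁻) × ϱ)·e₁`, then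
`Ω̄⁺ = Ω⁻ − (1+ε)(Ω⁻·(Rᵀt))(Rᵀt)`. -/
theorem pendulum_collision_response
    (R : Matrix (Fin 3) (Fin 3) ℝ) (hR : Rᵀ * R = 1)
    (ϱ : Fin 3 → ℝ) (J₁ J₃ : ℝ) (hJ₁ : 0 < J₁) (hJ₃ : 0 < J₃) (ε : ℝ) (j : ℝ)
    (Ωm Ωp : Fin 3 → ℝ) :
    let e₁ : Fin 3 → ℝ := ![(1 : ℝ), 0, 0]
    let e₃ : Fin 3 → ℝ := ![(0 : ℝ), 0, 1]
    let J : Matrix (Fin 3) (Fin 3) ℝ := Matrix.diagonal ![J₁, J₁, J₃]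
    let t : Fin 3 → ℝ := (euclNorm (ϱ ⨯₃ e₁))⁻¹ • (ϱ ⨯₃ e₁)
    ϱ ⨯₃ e₁ ≠ 0 →
    t ⬝ᵥ (R *ᵥ e₃) = 0 →
    Ωp - Ωm = J⁻¹ *ᵥ (Rᵀ *ᵥ (ϱ ⨯₃ ((-j) • e₁))) →
    ((R *ᵥ Ωp) ⨯₃ ϱ) ⬝ᵥ e₁ = -ε * (((R *ᵥ Ωm) ⨯₃ ϱ) ⬝ᵥ e₁) →
    Ωp = Ωm - ((1 + ε) * (Ωm ⬝ᵥ (Rᵀ *ᵥ t))) • (Rᵀ *ᵥ t) := by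
  intro e₁ e₃ J t hc hperp himp hres
  have ht : t = (euclNorm (ϱ ⨯₃ e₁))⁻¹ • (ϱ ⨯₃ e₁) := rfl
  have hJdef : J = Matrix.diagonal ![J₁, J₁, J₃] := rfl
  set c : Fin 3 → ℝ := ϱ ⨯₃ e₁ with hcdef
  set n : ℝ := euclNorm c with hndef
  have hnpos : 0 < n := euclNorm_pos' hc
  have hn0 : n ≠ 0 := ne_of_gt hnpos
  have hRRT : R * Rᵀ = 1 := (mul_eq_one_comm).mp hR
  set u : Fin 3 → ℝ := Rᵀ *ᵥ t with hu
  -- third component of u vanishes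
  have hu2 : u 2 = 0 := by
    have : u 2 = t ⬝ᵥ (R *ᵥ e₃) := by
      simp [hu, Matrix.mulVec, dotProduct, Fin.sum_univ_three, Matrix.transpose_apply, e₃]
      ring
    rw [this, hperp]
  -- u is a unit vector
  have huu : u ⬝ᵥ u = 1 := by
    have h1 : u ⬝ᵥ u = t ⬝ᵥ t := by
      calc u ⬝ᵥ u = (u ᵥ* Rᵀ) ⬝ᵥ t := by rw [hu, Matrix.dotProduct_mulVec]
        _ = (R *ᵥ u) ⬝ᵥ t := by rw [Matrix.vecMul_transpose]
        _ = t ⬝ᵥ t := by rw [hu, Matrix.mulVec_mulVec, hRRT, Matrix.one_mulVec]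
    have h2 : t ⬝ᵥ t = n⁻¹ * n⁻¹ * (c ⬝ᵥ c) := by
      rw [ht, smul_dotProduct, dotProduct_smul]
      simp [mul_assoc]
    rw [h1, h2, ← euclNorm_sq', ← hndef]
    field_simp
  -- inverse of J
  have hJinv : J⁻¹ = Matrix.diagonal ![J₁⁻¹, J₁⁻¹, J₃⁻¹] := by
    apply Matrix.inv_eq_right_inv
    ext i k
    fin_cases i <;> fin_cases k <;>
      simp [hJdef, Matrix.mul_apply, Fin.sum_univ_three, Matrix.diagonal,
        mul_inv_cancel₀ hJ₁.ne', mul_inv_cancel₀ hJ₃.ne']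
  -- J⁻¹ acting on u
  have hJu : J⁻¹ *ᵥ u = J₁⁻¹ • u := by
    funext i
    rw [hJinv]
    fin_cases i <;> simp [Matrix.mulVec_diagonal, hu2]
  -- rewrite the impulse equation
  have hRc : Rᵀ *ᵥ c = n • u := by
    rw [hu, ht, Matrix.mulVec_smul, smul_smul, mul_inv_cancel₀ hn0, one_smul]
  set k : ℝ := (-j) * n * J₁⁻¹ with hkdef
  have hOp : Ωp = Ωm + k • u := by
    have h1 : ϱ ⨯₃ ((-j) • e₁) = (-j) • c := by
      rw [hcdef]; exact map_smul (crossProduct ϱ) (-j) e₁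
    rw [h1, Matrix.mulVec_smul, hRc, Matrix.mulVec_smul, Matrix.mulVec_smul, hJu] at himp
    have h2 : Ωp - Ωm = k • u := by
      rw [himp, smul_smul, smul_smul, hkdef, mul_assoc]
    rw [← h2]; abel
  -- key dot product identity
  have hdot : ∀ Ω : Fin 3 → ℝ, ((R *ᵥ Ω) ⨯₃ ϱ) ⬝ᵥ e₁ = n * (Ω ⬝ᵥ u) := by
    intro Ω
    calc ((R *ᵥ Ω) ⨯₃ ϱ) ⬝ᵥ e₁ = (R *ᵥ Ω) ⬝ᵥ c := by rw [cross_dot', ← hcdef]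
      _ = (c ᵥ* R) ⬝ᵥ Ω := by rw [dotProduct_comm, Matrix.dotProduct_mulVec]
      _ = (Rᵀ *ᵥ c) ⬝ᵥ Ω := by rw [Matrix.mulVec_transpose]
      _ = Ω ⬝ᵥ (n • u) := by rw [hRc, dotProduct_comm]
      _ = n * (Ω ⬝ᵥ u) := by rw [dotProduct_smul, smul_eq_mul]
  have hres' : Ωp ⬝ᵥ u = -ε * (Ωm ⬝ᵥ u) := by
    rw [hdot, hdot] at hres
    have h3 : n * (Ωp ⬝ᵥ u) = n * (-ε * (Ωm ⬝ᵥ u)) := by linear_combination hres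
    exact mul_left_cancel₀ hn0 h3
  have hOpu : Ωp ⬝ᵥ u = Ωm ⬝ᵥ u + k := by
    rw [hOp, add_dotProduct, smul_dotProduct, huu, smul_eq_mul, mul_one]
  have hk : k = -((1 + ε) * (Ωm ⬝ᵥ u)) := by
    rw [hOpu] at hres'
    linear_combination hres'
  rw [hOp, hk, neg_smul, ← sub_eq_add_neg]
end

section
/- Let R be a real 3×3 matrix, let ϱ ∈ ℝ³, let J = diag(J₁, J₁, J₃) with J₁, J₃ > 0, let j ∈ ℝ, and suppose ((ϱ × e₁)) · (Re₃) = 0. If Ω̄⁺ − Ω⁻ = J⁻¹Rᵀ(ϱ × (−j e₁)), then (Ω̄⁺ − Ω⁻) · e₃ = 0; that is, the third component of the angular velocity is unchanged by the collision impulse: Ω̄⁺₃ = Ω⁻₃. -/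
open Matrix
open scoped Matrix

/-- If `(ϱ × e₁) · (R e₃) = 0` and
`Ω̄⁺ − Ω⁻ = J⁻¹Rᵀ(ϱ × (−j e₁))` with `J = diag(J₁,J₁,J₃)`, then the third component of the
angular velocity is unchanged by the collision impulse: `(Ω̄⁺ − Ω⁻)·e₃ = 0`, i.e.
`Ω̄⁺₃ = Ω⁻₃`. -/
theorem pendulum_collision_third_component
    (R : Matrix (Fin 3) (Fin 3) ℝ) (ϱ : Fin 3 → ℝ)
    (J₁ J₃ : ℝ) (hJ₁ : 0 < J₁) (hJ₃ : 0 < J₃) (j : ℝ) (Ωm Ωp : Fin 3 → ℝ) :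
    let e₁ : Fin 3 → ℝ := ![(1 : ℝ), 0, 0]
    let e₃ : Fin 3 → ℝ := ![(0 : ℝ), 0, 1]
    let J : Matrix (Fin 3) (Fin 3) ℝ := Matrix.diagonal ![J₁, J₁, J₃]
    (ϱ ⨯₃ e₁) ⬝ᵥ (R *ᵥ e₃) = 0 →
    Ωp - Ωm = J⁻¹ *ᵥ (Rᵀ *ᵥ (ϱ ⨯₃ ((-j) • e₁))) →
    ((Ωp - Ωm) ⬝ᵥ e₃ = 0 ∧ Ωp 2 = Ωm 2) := by
  intro e₁ e₃ J h1 h2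
  have hJinv : J⁻¹ = Matrix.diagonal ![J₁⁻¹, J₁⁻¹, J₃⁻¹] := by
    apply Matrix.inv_eq_right_inv
    rw [Matrix.diagonal_mul_diagonal]
    ext i k
    fin_cases i <;> fin_cases k <;>
      simp [Matrix.diagonal, Matrix.one_apply, mul_inv_cancel₀ hJ₁.ne', mul_inv_cancel₀ hJ₃.ne']
  rw [hJinv] at h2
  have key := congrFun h2 2
  simp [crossProduct, mulVec, dotProduct, Fin.sum_univ_three, e₁, e₃,
    Matrix.diagonal] at key h1 ⊢
  have h3 : Ωp 2 - Ωm 2 = 0 := by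
    rw [key]
    field_simp
    linear_combination -j * h1
  constructor
  · linarith
  · linarith
end
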